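/- Let q be a prime power with 5 | (q+1) and 5 ∤ (q-1), and let ω ∈ F_{q^2} be a primitive 5th root of unity. Let C = {(Tr(a ω^{-i}))_{i=0}^{4} : a ∈ F_{q^2}} ⊆ F_q^5, where Tr is the trace from F_{q^2} to F_q. Then C is a 2-dimensional linear code of length 5 over F_q with weight enumerator 1 + 5(q-1)z^4 + (q-1)(q-4)z^5; in particular every nonzero codeword has weight 4 or 5 and the minimum distance of C is 4. -/

import Mathlib

open Polynomial
open Finset


-- roots bound helper
lemma aux_card_pow_le (q : ℕ) (hq : 2 ≤ q) (E : Type) [Field E] [Fintype E] [DecidableEq E]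
    (b : E) : (Finset.univ.filter fun x : E => x ^ q = b * x).card ≤ q := by
  classical
  set f : E[X] := X ^ q - C b * X with hf
  have hdeg : f.natDegree = q := by
    rw [hf]
    rw [natDegree_sub_eq_left_of_natDegree_lt]
    · exact natDegree_X_pow q
    · rw [natDegree_X_pow]
      calc (C b * X).natDegree ≤ 1 := by
            simpa using natDegree_C_mul_le b X
        _ < q := by omega
  have hf0 : f ≠ 0 := by
    intro h
    rw [h, natDegree_zero] at hdeg; omega
  have hsub : (Finset.univ.filter fun x : E => x ^ q = b * x) ⊆ f.roots.toFinset := by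
    intro x hx
    rw [Finset.mem_filter] at hx
    rw [Multiset.mem_toFinset, mem_roots hf0]
    simp [hf, IsRoot, sub_eq_zero, hx.2]
  calc _ ≤ f.roots.toFinset.card := Finset.card_le_card hsub
    _ ≤ Multiset.card f.roots := Multiset.toFinset_card_le _
    _ ≤ f.natDegree := f.card_roots'
    _ = q := hdeg

lemma aux_trace (p m q : ℕ) (hp : p.Prime) (hm : 0 < m) (hq : q = p ^ m)
    (F E : Type) [Field F] [Fintype F] [Field E] [Fintype E] [Algebra F E]
    (hF : Fintype.card F = q) (hE : Fintype.card E = q ^ 2) (x : E) :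
    algebraMap F E (Algebra.trace F E x) = x + x ^ q := by
  classical
  have hq2 : 2 ≤ q := by
    subst hq; calc 2 ≤ p := hp.two_le
      _ ≤ p ^ m := Nat.le_self_pow hm.ne' p
  -- char p
  haveI : Fact p.Prime := ⟨hp⟩
  have hcharF : CharP F p := by
    obtain ⟨n, hrp, hcard⟩ := FiniteField.card F (ringChar F)
    have : ringChar F = p := by
      have hd : p ∣ (ringChar F) ^ (n : ℕ) := by
        rw [← hcard, hF, hq]
        exact dvd_pow_self p hm.ne'
      have := hp.dvd_of_dvd_pow hd
      exact ((Nat.prime_dvd_prime_iff_eq hp hrp).mp this).symm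
    exact this ▸ ringChar.charP F
  haveI := hcharF
  haveI : CharP E p := charP_of_injective_algebraMap (algebraMap F E).injective p
  haveI : ExpChar E p := ExpChar.prime hp
  -- frobenius algebra equiv
  have hcomm : ∀ c : F, (iterateFrobenius E p m) (algebraMap F E c) = algebraMap F E c := by
    intro c
    rw [iterateFrobenius_def, ← map_pow, ← hq, ← hF, FiniteField.pow_card]
  let σa : E →ₐ[F] E := ⟨iterateFrobenius E p m, hcomm⟩
  have hbij : Function.Bijective σa :=
    (Finite.injective_iff_bijective).mp (σa.toRingHom.injective)
  let σ : E ≃ₐ[F] E := AlgEquiv.ofBijective σa hbij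
  have hσ : ∀ y : E, σ y = y ^ q := by
    intro y; show iterateFrobenius E p m y = y ^ q
    rw [iterateFrobenius_def, hq]
  -- σ ≠ refl
  have hne : σ ≠ AlgEquiv.refl := by
    intro h
    have hall : ∀ y : E, y ^ q = 1 * y := by
      intro y
      rw [one_mul, ← hσ, h]; rfl
    have hle := aux_card_pow_le q hq2 E 1
    have : (Finset.univ.filter fun x : E => x ^ q = 1 * x) = Finset.univ := by
      apply Finset.eq_univ_of_forall
      intro y; simp [hall y]
    rw [this, Finset.card_univ, hE] at hle
    nlinarith
  -- card of aut group is 2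
  have hrank : Module.finrank F E = 2 := by
    have h := Module.card_eq_pow_finrank (K := F) (V := E)
    rw [hF, hE] at h
    exact (Nat.pow_right_injective hq2 h.symm)
  have hcardaut : Fintype.card (E ≃ₐ[F] E) = 2 := by
    rw [← Nat.card_eq_fintype_card, IsGalois.card_aut_eq_finrank, hrank]
  have huniv : (Finset.univ : Finset (E ≃ₐ[F] E)) = {AlgEquiv.refl, σ} := by
    symm
    apply Finset.eq_univ_of_card
    rw [Finset.card_insert_of_notMem (by simpa using (Ne.symm hne)), Finset.card_singleton,
      hcardaut]
  rw [trace_eq_sum_automorphisms, huniv, Finset.sum_pair (Ne.symm hne)]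
  rw [hσ]; rfl
lemma aux_ker_card (p m q : ℕ) (hp : p.Prime) (hm : 0 < m) (hq : q = p ^ m)
    (F E : Type) [Field F] [Fintype F] [DecidableEq F] [Field E] [Fintype E] [Algebra F E]
    (hF : Fintype.card F = q) (hE : Fintype.card E = q ^ 2) :
    (Finset.univ.filter fun x : E => Algebra.trace F E x = 0).card = q := by
  have hq2 : 2 ≤ q := by
    subst hq; calc 2 ≤ p := hp.two_le
      _ ≤ p ^ m := Nat.le_self_pow hm.ne' p
  have hrank : Module.finrank F E = 2 := by
    have h := Module.card_eq_pow_finrank (K := F) (V := E)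
    rw [hF, hE] at h
    exact (Nat.pow_right_injective hq2 h.symm)
  have hsurj : Function.Surjective (Algebra.trace F E) := Algebra.trace_surjective F E
  have hrange : LinearMap.range (Algebra.trace F E) = ⊤ := LinearMap.range_eq_top.mpr hsurj
  have hrn := LinearMap.finrank_range_add_finrank_ker (Algebra.trace F E)
  rw [hrange, finrank_top, Module.finrank_self, hrank] at hrn
  have hkrank : Module.finrank F (LinearMap.ker (Algebra.trace F E)) = 1 := by omega
  haveI : Fintype (LinearMap.ker (Algebra.trace F E)) :=
    Fintype.ofFinite (LinearMap.ker (Algebra.trace F E))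
  have hcardK : Fintype.card (LinearMap.ker (Algebra.trace F E)) = q := by
    have h := Module.card_eq_pow_finrank (K := F) (V := (LinearMap.ker (Algebra.trace F E)))
    rw [hF, hkrank, pow_one] at h
    exact h
  rw [← Fintype.card_subtype, ← hcardK]
  exact Fintype.card_congr (Equiv.subtypeEquivRight (fun x => (LinearMap.mem_ker).symm)).symm
theorem stmt_6 (p m q : ℕ) (hp : p.Prime) (hm : 0 < m) (hq : q = p ^ m)
    (F E : Type) [Field F] [Fintype F] [DecidableEq F] [Field E] [Fintype E] [Algebra F E]
    (hF : Fintype.card F = q) (hE : Fintype.card E = q ^ 2)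
    (h1 : 5 ∣ q + 1) (h2 : ¬ (5 ∣ q - 1))
    (ω : E) (hω : IsPrimitiveRoot ω 5)
    (Ccode : Set (Fin 5 → F))
    (hC : Ccode = {c | ∃ a : E, ∀ i : Fin 5,
      c i = Algebra.trace F E (a * (ω ^ (i : ℕ))⁻¹)}) :
    Module.finrank F (Submodule.span F Ccode) = 2 ∧
      (Set.ncard {c ∈ Ccode | hammingNorm c = 0} : ℤ) = 1 ∧
      (∀ i, 0 < i → i < 4 → (Set.ncard {c ∈ Ccode | hammingNorm c = i} : ℤ) = 0) ∧
      (Set.ncard {c ∈ Ccode | hammingNorm c = 4} : ℤ) = 5 * ((q : ℤ) - 1) ∧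
      (Set.ncard {c ∈ Ccode | hammingNorm c = 5} : ℤ) = ((q : ℤ) - 1) * ((q : ℤ) - 4) ∧
      (∀ c ∈ Ccode, c ≠ 0 → hammingNorm c = 4 ∨ hammingNorm c = 5) ∧
      sInf {w | ∃ c ∈ Ccode, c ≠ 0 ∧ hammingNorm c = w} = 4 := by
  classical
  have hq2 : 2 ≤ q := by
    subst hq; calc 2 ≤ p := hp.two_le
      _ ≤ p ^ m := Nat.le_self_pow hm.ne' p
  have hq4 : 4 ≤ q := by obtain ⟨k, hk⟩ := h1; omega
  have hq0 : q ≠ 0 := by omega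
  have htr := aux_trace p m q hp hm hq F E hF hE
  have htr0 : ∀ x : E, Algebra.trace F E x = 0 ↔ x + x ^ q = 0 := by
    intro x
    rw [← htr x]
    exact ⟨fun h => by rw [h, map_zero], fun h => by
      have := (algebraMap F E).injective (a₁ := Algebra.trace F E x) (a₂ := 0)
      rw [map_zero] at this; exact this h⟩
  have hω5 : ω ^ 5 = 1 := hω.pow_eq_one
  have hωne : ω ≠ 0 := hω.ne_zero (by norm_num)
  have hωq : ω ^ q = ω⁻¹ := by
    obtain ⟨k, hk⟩ := h1
    have hk1 : 1 ≤ k := by omega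
    have : ω ^ q * ω = 1 := by
      rw [← pow_succ, show q + 1 = 5 * k from hk, pow_mul, hω5, one_pow]
    field_simp at this ⊢
    linear_combination this
  -- the linear map
  set Tlin : E →ₗ[F] (Fin 5 → F) :=
    LinearMap.pi (fun i : Fin 5 =>
      (Algebra.trace F E) ∘ₗ (LinearMap.mulRight F ((ω ^ (i : ℕ))⁻¹))) with hTlin
  set T : E → (Fin 5 → F) := ⇑Tlin with hT
  have hTapp : ∀ (a : E) (i : Fin 5), T a i = Algebra.trace F E (a * (ω ^ (i : ℕ))⁻¹) := by
    intro a i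
    simp [hT, hTlin, LinearMap.pi_apply]
  have hCrange : Ccode = Set.range T := by
    rw [hC]
    ext c
    constructor
    · rintro ⟨a, ha⟩
      exact ⟨a, by funext i; rw [hTapp, ← ha]⟩
    · rintro ⟨a, rfl⟩
      exact ⟨a, fun i => (hTapp a i).symm⟩
  -- the coordinate-zero condition
  set P : E → Fin 5 → Prop := fun a i => a + a ^ q * ω ^ (2 * (i : ℕ)) = 0 with hP
  have hTP : ∀ (a : E) (i : Fin 5), T a i = 0 ↔ P a i := by
    intro a i
    rw [hTapp, htr0]
    have hωi : ω ^ (i : ℕ) ≠ 0 := pow_ne_zero _ hωne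
    have hy : (a * (ω ^ (i : ℕ))⁻¹) ^ q = a ^ q * ω ^ (i : ℕ) := by
      rw [mul_pow, inv_pow, ← pow_mul, mul_comm (i : ℕ) q, pow_mul, hωq, inv_pow, inv_inv]
    rw [hy]
    constructor
    · intro h
      have := congrArg (· * ω ^ (i : ℕ)) h
      simp only [zero_mul] at this
      rw [hP]
      field_simp at this ⊢
      linear_combination this
    · intro h
      rw [hP] at h
      have hne : (ω ^ (i : ℕ)) ^ 2 = ω ^ (2 * (i : ℕ)) := by
        rw [← pow_mul, mul_comm]
      field_simp
      linear_combination h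
  -- uniqueness of the zero coordinate
  have huniq : ∀ a : E, a ≠ 0 → ∀ i j : Fin 5, P a i → P a j → i = j := by
    intro a ha i j hi hj
    rw [hP] at hi hj
    have haq : a ^ q ≠ 0 := pow_ne_zero _ ha
    have hpow : ω ^ (2 * (i : ℕ)) = ω ^ (2 * (j : ℕ)) := by
      have h' : a ^ q * ω ^ (2 * (i : ℕ)) = a ^ q * ω ^ (2 * (j : ℕ)) := by
        linear_combination hi - hj
      exact mul_left_cancel₀ haq h'
    have horder : orderOf ω = 5 := hω.eq_orderOf.symm
    have hmod : ∀ n : ℕ, ω ^ (n % 5) = ω ^ n := by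
      intro n
      conv_rhs => rw [← Nat.div_add_mod n 5]
      rw [pow_add, pow_mul, hω5, one_pow, one_mul]
    have h2i : ω ^ (2 * (i : ℕ) % 5) = ω ^ (2 * (j : ℕ) % 5) := by
      rw [hmod, hmod]; exact hpow
    have := hω.pow_inj (Nat.mod_lt _ (by norm_num)) (Nat.mod_lt _ (by norm_num)) h2i
    have hi5 : (i : ℕ) < 5 := i.isLt
    have hj5 : (j : ℕ) < 5 := j.isLt
    have : (i : ℕ) = (j : ℕ) := by omega
    exact Fin.ext this
  -- 0 satisfies P for every i
  have hP0 : ∀ i : Fin 5, P 0 i := by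
    intro i; rw [hP]; simp [zero_pow hq0]
  -- cardinality of each coordinate-kernel
  have hcard_i : ∀ i : Fin 5, (Finset.univ.filter fun a : E => P a i).card = q := by
    intro i
    rw [← aux_ker_card p m q hp hm hq F E hF hE]
    apply Finset.card_bij (fun a _ => a * (ω ^ (i : ℕ))⁻¹)
    · intro a ha
      rw [Finset.mem_filter] at ha ⊢
      refine ⟨Finset.mem_univ _, ?_⟩
      rw [← hTapp, hTP]
      exact ha.2
    · intro a _ b _ hab
      exact mul_right_cancel₀ (inv_ne_zero (pow_ne_zero _ hωne)) hab
    · intro b hb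
      rw [Finset.mem_filter] at hb
      refine ⟨b * ω ^ (i : ℕ), ?_, ?_⟩
      · rw [Finset.mem_filter]
        refine ⟨Finset.mem_univ _, ?_⟩
        rw [← hTP, hTapp]
        rw [mul_assoc, mul_inv_cancel₀ (pow_ne_zero _ hωne), mul_one]
        exact hb.2
      · rw [mul_assoc, mul_inv_cancel₀ (pow_ne_zero _ hωne), mul_one]
  -- weight dichotomy
  have hnorm_eq : ∀ c : Fin 5 → F,
      hammingNorm c + (Finset.univ.filter fun i => c i = 0).card = 5 := by
    intro c
    have := Finset.card_filter_add_card_filter_not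
      (s := (Finset.univ : Finset (Fin 5))) (p := fun i => c i = 0)
    rw [Finset.card_univ, Fintype.card_fin] at this
    have hnorm : hammingNorm c = (Finset.univ.filter fun i => ¬ c i = 0).card := rfl
    omega
  have hweight : ∀ a : E, a ≠ 0 →
      ((∃ i, P a i) ∧ hammingNorm (T a) = 4) ∨ ((∀ i, ¬ P a i) ∧ hammingNorm (T a) = 5) := by
    intro a ha
    by_cases h : ∃ i, P a i
    · left
      refine ⟨h, ?_⟩
      obtain ⟨i₀, hi₀⟩ := h
      have hfe : (Finset.univ.filter fun i => T a i = 0) = {i₀} := by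
        ext j
        simp only [Finset.mem_filter, Finset.mem_univ, true_and, Finset.mem_singleton]
        rw [hTP]
        constructor
        · intro hj; exact huniq a ha j i₀ hj hi₀
        · rintro rfl; exact hi₀
      have := hnorm_eq (T a)
      rw [hfe, Finset.card_singleton] at this
      omega
    · right
      push_neg at h
      refine ⟨h, ?_⟩
      have hfe : (Finset.univ.filter fun i => T a i = 0) = ∅ := by
        apply Finset.filter_eq_empty_iff.mpr
        intro j _
        rw [hTP]
        exact h j
      have := hnorm_eq (T a)
      rw [hfe, Finset.card_empty] at this
      omega
  -- injectivity of T
  have hker : ∀ a : E, T a = 0 → a = 0 := by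
    intro a ha
    by_contra h0
    have h0' : P a 0 := by
      rw [← hTP]; rw [ha]; rfl
    have h1' : P a 1 := by
      rw [← hTP]; rw [ha]; rfl
    rw [hP] at h0' h1'
    simp only [Fin.val_zero, mul_zero, pow_zero, mul_one] at h0'
    have hω2 : ω ^ (2 * ((1 : Fin 5) : ℕ)) = ω ^ 2 := by norm_num
    rw [hω2] at h1'
    have : a ^ q * (1 - ω ^ 2) = 0 := by linear_combination h0' - h1'
    rcases mul_eq_zero.mp this with h | h
    · exact h0 (pow_eq_zero_iff hq0 |>.mp h)
    · have : ω ^ 2 = 1 := by linear_combination -h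
      exact hω.pow_ne_one_of_pos_of_lt (by norm_num) (by norm_num) this
  have hTinj : Function.Injective T := by
    rw [hT]
    rw [← LinearMap.ker_eq_bot]
    rw [LinearMap.ker_eq_bot']
    intro a ha
    exact hker a ha
  -- finrank of E over F
  have hrank : Module.finrank F E = 2 := by
    have h := Module.card_eq_pow_finrank (K := F) (V := E)
    rw [hF, hE] at h
    exact (Nat.pow_right_injective hq2 h.symm)
  -- A4 counting
  set A4 : Finset E := Finset.univ.filter (fun a : E => a ≠ 0 ∧ ∃ i, P a i) with hA4
  have hA4card : A4.card = 5 * (q - 1) := by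
    have hbi : A4 = Finset.univ.biUnion
        (fun i : Fin 5 => Finset.univ.filter fun a : E => a ≠ 0 ∧ P a i) := by
      ext a
      simp only [hA4, Finset.mem_filter, Finset.mem_univ, true_and, Finset.mem_biUnion]
      tauto
    rw [hbi, Finset.card_biUnion]
    · have hone : ∀ i : Fin 5,
          (Finset.univ.filter fun a : E => a ≠ 0 ∧ P a i).card = q - 1 := by
        intro i
        have he : (Finset.univ.filter fun a : E => a ≠ 0 ∧ P a i)
            = (Finset.univ.filter fun a : E => P a i).erase 0 := by
          ext a
          rw [Finset.mem_erase, Finset.mem_filter, Finset.mem_filter]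
          simp only [Finset.mem_univ, true_and]
          try tauto
        rw [he, Finset.card_erase_of_mem, hcard_i i]
        rw [Finset.mem_filter]
        exact ⟨Finset.mem_univ _, hP0 i⟩
      rw [Finset.sum_congr rfl (fun i _ => hone i)]
      simp [Finset.sum_const, Finset.card_univ]
    · intro i _ j _ hij
      rw [Function.onFun, Finset.disjoint_left]
      intro a hai haj
      rw [Finset.mem_filter] at hai haj
      exact hij (huniq a hai.2.1 i j hai.2.2 haj.2.2)
  -- A5 counting
  set A5 : Finset E := Finset.univ.filter (fun a : E => a ≠ 0 ∧ ∀ i, ¬ P a i) with hA5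
  have hA5card : (A5.card : ℤ) = ((q : ℤ) - 1) * ((q : ℤ) - 4) := by
    have hsd : A5 = Finset.univ \ insert (0 : E) A4 := by
      ext a
      simp only [hA5, hA4, Finset.mem_filter, Finset.mem_univ, true_and, Finset.mem_sdiff,
        Finset.mem_insert, not_or, not_and, not_exists]
      tauto
    have h0nA4 : (0 : E) ∉ A4 := by
      simp [hA4]
    have hsub : insert (0 : E) A4 ⊆ Finset.univ := Finset.subset_univ _
    have hcards := Finset.card_sdiff_add_card_eq_card hsub
    rw [Finset.card_insert_of_notMem h0nA4, hA4card, Finset.card_univ, hE] at hcards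
    rw [← hsd] at hcards
    have hq1 : (1 : ℕ) ≤ q := by omega
    have := congrArg (fun n : ℕ => (n : ℤ)) hcards
    push_cast [Nat.cast_sub hq1] at this
    ring_nf
    ring_nf at this
    linarith
  -- basic facts
  have hT0 : T 0 = 0 := by rw [hT]; exact map_zero Tlin
  have hTne : ∀ a : E, a ≠ 0 → T a ≠ 0 := by
    intro a ha h
    exact ha (hker a h)
  -- Part 1 : finrank
  have part1 : Module.finrank F (Submodule.span F Ccode) = 2 := by
    rw [hCrange, hT, ← LinearMap.coe_range, Submodule.span_eq]
    rw [LinearMap.finrank_range_of_inj (hT ▸ hTinj)]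
    exact hrank
  -- Part 2 : weight 0
  have hzero_mem : (0 : Fin 5 → F) ∈ Ccode := by
    rw [hCrange]; exact ⟨0, hT0⟩
  have part2 : {c ∈ Ccode | hammingNorm c = 0} = {(0 : Fin 5 → F)} := by
    ext c
    simp only [Set.mem_setOf_eq, Set.mem_singleton_iff, hammingNorm_eq_zero]
    constructor
    · rintro ⟨_, rfl⟩; rfl
    · rintro rfl; exact ⟨hzero_mem, rfl⟩
  -- Part 3 : weights 1,2,3 empty
  have part3 : ∀ w : ℕ, 0 < w → w < 4 → {c ∈ Ccode | hammingNorm c = w} = (∅ : Set (Fin 5 → F)) := by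
    intro w hw0 hw4
    ext c
    simp only [Set.mem_setOf_eq, Set.mem_empty_iff_false, iff_false, not_and]
    intro hc hn
    rw [hCrange] at hc
    obtain ⟨a, rfl⟩ := hc
    by_cases ha : a = 0
    · subst ha
      rw [hT0, hammingNorm_zero] at hn
      omega
    · rcases hweight a ha with ⟨_, h4⟩ | ⟨_, h5⟩ <;> omega
  -- Part 4 : weight 4
  have part4 : {c ∈ Ccode | hammingNorm c = 4} = T '' (A4 : Set E) := by
    ext c
    simp only [Set.mem_setOf_eq, Set.mem_image, Finset.mem_coe, hA4, Finset.mem_filter,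
      Finset.mem_univ, true_and]
    constructor
    · rintro ⟨hc, hn⟩
      rw [hCrange] at hc
      obtain ⟨a, rfl⟩ := hc
      have ha : a ≠ 0 := by
        intro h; subst h; rw [hT0, hammingNorm_zero] at hn; omega
      rcases hweight a ha with ⟨hex, _⟩ | ⟨_, h5⟩
      · exact ⟨a, ⟨ha, hex⟩, rfl⟩
      · omega
    · rintro ⟨a, ⟨ha, hex⟩, rfl⟩
      refine ⟨by rw [hCrange]; exact ⟨a, rfl⟩, ?_⟩
      rcases hweight a ha with ⟨_, h4⟩ | ⟨hall, _⟩
      · exact h4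
      · obtain ⟨i, hi⟩ := hex; exact absurd hi (hall i)
  -- Part 5 : weight 5
  have part5 : {c ∈ Ccode | hammingNorm c = 5} = T '' (A5 : Set E) := by
    ext c
    simp only [Set.mem_setOf_eq, Set.mem_image, Finset.mem_coe, hA5, Finset.mem_filter,
      Finset.mem_univ, true_and]
    constructor
    · rintro ⟨hc, hn⟩
      rw [hCrange] at hc
      obtain ⟨a, rfl⟩ := hc
      have ha : a ≠ 0 := by
        intro h; subst h; rw [hT0, hammingNorm_zero] at hn; omega
      rcases hweight a ha with ⟨_, h4⟩ | ⟨hall, _⟩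
      · omega
      · exact ⟨a, ⟨ha, hall⟩, rfl⟩
    · rintro ⟨a, ⟨ha, hall⟩, rfl⟩
      refine ⟨by rw [hCrange]; exact ⟨a, rfl⟩, ?_⟩
      rcases hweight a ha with ⟨hex, _⟩ | ⟨_, h5⟩
      · obtain ⟨i, hi⟩ := hex; exact absurd hi (hall i)
      · exact h5
  -- Part 6 : dichotomy
  have part6 : ∀ c ∈ Ccode, c ≠ 0 → hammingNorm c = 4 ∨ hammingNorm c = 5 := by
    intro c hc hc0
    rw [hCrange] at hc
    obtain ⟨a, rfl⟩ := hc
    have ha : a ≠ 0 := by rintro rfl; exact hc0 hT0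
    rcases hweight a ha with ⟨_, h4⟩ | ⟨_, h5⟩
    · exact Or.inl h4
    · exact Or.inr h5
  refine ⟨part1, ?_, ?_, ?_, ?_, part6, ?_⟩
  · rw [part2, Set.ncard_singleton]; norm_num
  · intro w hw0 hw4
    rw [part3 w hw0 hw4, Set.ncard_empty]; norm_num
  · rw [part4, Set.ncard_image_of_injective _ hTinj, Set.ncard_coe_finset, hA4card]
    have hq1 : (1 : ℕ) ≤ q := by omega
    push_cast [Nat.cast_sub hq1]
    ring
  · rw [part5, Set.ncard_image_of_injective _ hTinj, Set.ncard_coe_finset]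
    exact hA5card
  · -- sInf
    have hA4ne : A4.Nonempty := by
      rw [← Finset.card_pos, hA4card]; omega
    obtain ⟨a, haA4⟩ := hA4ne
    rw [hA4, Finset.mem_filter] at haA4
    obtain ⟨-, ha0, hex⟩ := haA4
    have hmem : 4 ∈ {w | ∃ c ∈ Ccode, c ≠ 0 ∧ hammingNorm c = w} := by
      refine ⟨T a, by rw [hCrange]; exact ⟨a, rfl⟩, hTne a ha0, ?_⟩
      rcases hweight a ha0 with ⟨_, h4⟩ | ⟨hall, _⟩
      · exact h4
      · obtain ⟨i, hi⟩ := hex; exact absurd hi (hall i)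
    apply le_antisymm
    · exact Nat.sInf_le hmem
    · apply le_csInf ⟨4, hmem⟩
      rintro w ⟨c, hc, hc0, rfl⟩
      rcases part6 c hc hc0 with h | h <;> omega
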